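/- Descent lemma for normalized steepest descent with weight decay: if L is convex with H-Lipschitz gradient w.r.t. norm ‖·‖, x* is a minimizer of L over the ball {‖x‖ ≤ 1/λ}, and x_t = (1 − λη_t)x_{t−1} − η_t Δ_t with Δ_t a unit-norm steepest descent direction, then L(x_t) − L(x*) ≤ (1 − λη_t)(L(x_{t−1}) − L(x*)) + (H/2) η_t² (1 + λ‖x_{t−1}‖)². -/

import Mathlib

open scoped RealInnerProductSpace BigOperators
open Filter Finset
open Topology

/-- `N` is a norm on `ℝ^d`. -/
def IsNorm {d : ℕ} (N : EuclideanSpace ℝ (Fin d) → ℝ) : Prop :=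
  (∀ x, N x = 0 ↔ x = 0) ∧ (∀ (c : ℝ) (x), N (c • x) = |c| * N x) ∧
    (∀ x y, N (x + y) ≤ N x + N y)

/-- `D` is the dual norm of `N`: `D g` is the maximum of `⟪g, x⟫` over the unit ball of `N`
(the supremum is attained in finite dimension). -/
def IsDualNorm {d : ℕ} (N D : EuclideanSpace ℝ (Fin d) → ℝ) : Prop :=
  ∀ g, IsGreatest {r : ℝ | ∃ x, N x ≤ 1 ∧ r = ⟪g, x⟫} (D g)

/-- `g` is a subgradient of the convex function `f` at `x`. -/
def SubgradientAt {d : ℕ} (f : EuclideanSpace ℝ (Fin d) → ℝ)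
    (x g : EuclideanSpace ℝ (Fin d)) : Prop :=
  ∀ y, f x + ⟪y - x, g⟫ ≤ f y

/-- descent lemma for normalized steepest descent with weight decay. If `L` is
convex with `H`-Lipschitz gradient w.r.t. the norm `N` (dual norm `D`), `x*` minimizes `L`
over the ball `{N ≤ 1/λ}`, and `Δ` is a unit-norm steepest descent direction at `xprev`, then
`L(x_t) - L(x*) ≤ (1 - λη)(L(xprev) - L(x*)) + (H/2) η² (1 + λ N(xprev))²` where
`x_t = (1 - λη) • xprev - η • Δ`. -/

lemma IsNorm.nonneg {d : ℕ} {N : EuclideanSpace ℝ (Fin d) → ℝ} (hN : IsNorm N) (x) :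
    0 ≤ N x := by
  have h0 : N 0 = 0 := (hN.1 0).mpr rfl
  have := hN.2.2 x (-x)
  have hneg : N (-x) = N x := by
    have := hN.2.1 (-1) x; simpa using this
  simp only [add_neg_cancel, h0, hneg] at this
  linarith

lemma dual_nonneg {d : ℕ} {N D : EuclideanSpace ℝ (Fin d) → ℝ} (hN : IsNorm N)
    (hD : IsDualNorm N D) (g) : 0 ≤ D g := by
  have h0 : N 0 = 0 := (hN.1 0).mpr rfl
  exact (hD g).2 ⟨0, by simp [h0]⟩

lemma pair_le {d : ℕ} {N D : EuclideanSpace ℝ (Fin d) → ℝ} (hN : IsNorm N)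
    (hD : IsDualNorm N D) (g y) : ⟪g, y⟫ ≤ D g * N y := by
  rcases eq_or_ne y 0 with rfl | hy
  · have h0 : N 0 = 0 := (hN.1 0).mpr rfl
    simp [h0]
  · have hNy : 0 < N y := lt_of_le_of_ne (hN.nonneg y) (fun h => hy ((hN.1 y).mp h.symm))
    have hu : N ((N y)⁻¹ • y) ≤ 1 := by
      rw [hN.2.1, abs_of_pos (by positivity)]
      field_simp
      exact le_rfl
    have := (hD g).2 ⟨(N y)⁻¹ • y, hu, rfl⟩
    rw [real_inner_smul_right] at this
    calc ⟪g, y⟫ = N y * ((N y)⁻¹ * ⟪g, y⟫) := by field_simp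
    _ ≤ N y * D g := by exact mul_le_mul_of_nonneg_left this hNy.le
    _ = D g * N y := mul_comm _ _

lemma line_deriv {d : ℕ} {L : EuclideanSpace ℝ (Fin d) → ℝ}
    {G : EuclideanSpace ℝ (Fin d) → EuclideanSpace ℝ (Fin d)}
    (hG : ∀ x, HasGradientAt L (G x) x) (x v : EuclideanSpace ℝ (Fin d)) (t : ℝ) :
    HasDerivAt (fun s : ℝ => L (x + s • v)) ⟪G (x + t • v), v⟫ t := by
  have hc : HasDerivAt (fun s : ℝ => x + s • v) v t := by
    simpa using ((hasDerivAt_id t).smul_const v).const_add x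
  have hf : HasFDerivAt L (InnerProductSpace.toDual ℝ _ (G (x + t • v))) (x + t • v) :=
    hasGradientAt_iff_hasFDerivAt.mp (hG _)
  have := hf.comp_hasDerivAt t hc
  simpa [InnerProductSpace.toDual_apply_apply, Function.comp_def] using this

/-- smoothness descent lemma -/
lemma descent_smooth {d : ℕ} {N D : EuclideanSpace ℝ (Fin d) → ℝ} (hN : IsNorm N)
    (hD : IsDualNorm N D) {H : ℝ} (hH : 0 < H)
    {L : EuclideanSpace ℝ (Fin d) → ℝ} {G : EuclideanSpace ℝ (Fin d) → EuclideanSpace ℝ (Fin d)}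
    (hG : ∀ x, HasGradientAt L (G x) x)
    (hlip : ∀ x y, D (G x - G y) ≤ H * N (x - y)) (x v : EuclideanSpace ℝ (Fin d)) :
    L (x + v) ≤ L x + ⟪G x, v⟫ + H / 2 * (N v) ^ 2 := by
  set φ : ℝ → ℝ := fun t => L (x + t • v) - t * ⟪G x, v⟫ - H / 2 * (N v) ^ 2 * t ^ 2 with hφ
  have hder : ∀ t : ℝ, HasDerivAt φ
      (⟪G (x + t • v), v⟫ - ⟪G x, v⟫ - H * (N v) ^ 2 * t) t := by
    intro t
    have h1 := line_deriv hG x v t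
    have h2 : HasDerivAt (fun s : ℝ => s * ⟪G x, v⟫) ⟪G x, v⟫ t := by
      simpa using (hasDerivAt_id t).mul_const ⟪G x, v⟫
    have h3 : HasDerivAt (fun s : ℝ => H / 2 * (N v) ^ 2 * s ^ 2)
        (H * (N v) ^ 2 * t) t := by
      have := ((hasDerivAt_pow 2 t).const_mul (H / 2 * (N v) ^ 2))
      exact this.congr_deriv (by ring)
    exact (h1.sub h2).sub h3
  have hanti : AntitoneOn φ (Set.Icc 0 1) := by
    apply antitoneOn_of_deriv_nonpos (convex_Icc 0 1)
    · have hdiff : Differentiable ℝ φ := fun t => (hder t).differentiableAt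
      exact hdiff.continuous.continuousOn
    · intro t ht
      exact (hder t).differentiableAt.differentiableWithinAt
    · intro t ht
      rw [interior_Icc] at ht
      rw [(hder t).deriv]
      have hb : ⟪G (x + t • v) - G x, v⟫ ≤ H * t * (N v) ^ 2 := by
        calc ⟪G (x + t • v) - G x, v⟫ ≤ D (G (x + t • v) - G x) * N v :=
              pair_le hN hD _ _
        _ ≤ H * N (x + t • v - x) * N v := by
              exact mul_le_mul_of_nonneg_right (hlip _ _) (hN.nonneg v)
        _ = H * t * (N v) ^ 2 := by
              have : x + t • v - x = t • v := by abel
              rw [this, hN.2.1, abs_of_pos ht.1]; ring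
      rw [inner_sub_left] at hb
      nlinarith [hb]
  have := hanti (Set.mem_Icc.mpr ⟨le_refl 0, zero_le_one⟩)
    (Set.mem_Icc.mpr ⟨zero_le_one, le_refl 1⟩) zero_le_one
  simp only [hφ, zero_smul, add_zero, one_smul, zero_pow, one_pow] at this
  simp only [zero_mul, mul_zero, sub_zero, mul_one, one_mul] at this
  linarith

/-- convexity gradient inequality -/
lemma conv_grad {d : ℕ} {L : EuclideanSpace ℝ (Fin d) → ℝ}
    {G : EuclideanSpace ℝ (Fin d) → EuclideanSpace ℝ (Fin d)}
    (hG : ∀ x, HasGradientAt L (G x) x) (hconv : ConvexOn ℝ Set.univ L)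
    (x y : EuclideanSpace ℝ (Fin d)) :
    L x + ⟪G x, y - x⟫ ≤ L y := by
  have hder : HasDerivAt (fun s : ℝ => L (x + s • (y - x))) ⟪G x, y - x⟫ 0 := by
    have := line_deriv hG x (y - x) 0
    simpa using this
  have hslope := hasDerivAt_iff_tendsto_slope.mp hder
  have hsub : 𝓝[>] (0:ℝ) ≤ 𝓝[≠] (0:ℝ) :=
    nhdsWithin_mono _ (fun t ht => ne_of_gt ht)
  have hslope' : Tendsto (slope (fun s : ℝ => L (x + s • (y - x))) 0) (𝓝[>] 0)
      (𝓝 ⟪G x, y - x⟫) := hslope.mono_left hsub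
  have hev : ∀ᶠ t in 𝓝[>] (0:ℝ),
      slope (fun s : ℝ => L (x + s • (y - x))) 0 t ≤ L y - L x := by
    filter_upwards [Ioc_mem_nhdsGT_of_mem (Set.mem_Ico.mpr ⟨le_refl 0, zero_lt_one⟩)]
      with t ht
    have ht0 : 0 < t := ht.1
    have ht1 : t ≤ 1 := ht.2
    have hcomb : L (x + t • (y - x)) ≤ (1 - t) * L x + t * L y := by
      have : x + t • (y - x) = (1 - t) • x + t • y := by module
      rw [this]
      exact hconv.2 (Set.mem_univ x) (Set.mem_univ y) (by linarith) ht0.le (by ring)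
    rw [slope_def_field]
    simp only [zero_smul, add_zero, sub_zero]
    rw [div_le_iff₀ ht0]
    nlinarith [hcomb]
  have := le_of_tendsto hslope' hev
  linarith

theorem nsd_wd_descent_lemma {d : ℕ} (N D : EuclideanSpace ℝ (Fin d) → ℝ)
    (hN : IsNorm N) (hD : IsDualNorm N D) (H lam η : ℝ) (hH : 0 < H) (hlam : 0 < lam)
    (hη : 0 < lam * η) (hη' : lam * η ≤ 1)
    (L : EuclideanSpace ℝ (Fin d) → ℝ) (G : EuclideanSpace ℝ (Fin d) → EuclideanSpace ℝ (Fin d))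
    (hG : ∀ x, HasGradientAt L (G x) x)
    (hconv : ConvexOn ℝ Set.univ L)
    (hlip : ∀ x y, D (G x - G y) ≤ H * N (x - y))
    (xstar xprev Δ : EuclideanSpace ℝ (Fin d))
    (hstar_ball : N xstar ≤ 1 / lam) (hstar_min : ∀ y, N y ≤ 1 / lam → L xstar ≤ L y)
    (hΔnorm : N Δ = 1) (hΔsd : ⟪Δ, G xprev⟫ = D (G xprev)) :
    L ((1 - lam * η) • xprev - η • Δ) - L xstar ≤
      (1 - lam * η) * (L xprev - L xstar) + H / 2 * η ^ 2 * (1 + lam * N xprev) ^ 2 := by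
  have hηpos : 0 < η := by nlinarith
  set v : EuclideanSpace ℝ (Fin d) := (-(lam * η)) • xprev + (-η) • Δ with hv
  have hxt : (1 - lam * η) • xprev - η • Δ = xprev + v := by rw [hv]; module
  -- norm bound on v
  have hNv : N v ≤ η * (1 + lam * N xprev) := by
    calc N v ≤ N ((-(lam * η)) • xprev) + N ((-η) • Δ) := hN.2.2 _ _
    _ = lam * η * N xprev + η := by
        rw [hN.2.1, hN.2.1, hΔnorm, abs_neg, abs_neg, abs_of_pos hη, abs_of_pos hηpos]
        ring
    _ = η * (1 + lam * N xprev) := by ring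
  have hNvnn : 0 ≤ N v := hN.nonneg v
  have hNv2 : H / 2 * (N v) ^ 2 ≤ H / 2 * η ^ 2 * (1 + lam * N xprev) ^ 2 := by
    have h1 : (N v) ^ 2 ≤ (η * (1 + lam * N xprev)) ^ 2 := by
      exact pow_le_pow_left₀ hNvnn hNv 2
    nlinarith [h1]
  -- inner product of v with gradient
  have hv_inner : ⟪G xprev, v⟫ = -(lam * η) * ⟪G xprev, xprev⟫ - η * D (G xprev) := by
    have hGD : ⟪G xprev, Δ⟫ = D (G xprev) := by rw [real_inner_comm]; exact hΔsd
    rw [hv, inner_add_right, real_inner_smul_right, real_inner_smul_right, hGD]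
    ring
  -- convexity + ball bound
  have hcg := conv_grad hG hconv xprev xstar
  rw [inner_sub_right] at hcg
  have hpair : ⟪G xprev, -xstar⟫ ≤ D (G xprev) * N (-xstar) := pair_le hN hD _ _
  have hNneg : N (-xstar) = N xstar := by
    have := hN.2.1 (-1) xstar; simpa using this
  rw [hNneg, inner_neg_right] at hpair
  have hDnn : 0 ≤ D (G xprev) := dual_nonneg hN hD _
  have h1 : D (G xprev) * N xstar ≤ D (G xprev) * (1 / lam) :=
    mul_le_mul_of_nonneg_left hstar_ball hDnn
  have h2 : L xprev - L xstar - D (G xprev) * (1 / lam) ≤ ⟪G xprev, xprev⟫ := by linarith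
  have key : ⟪G xprev, v⟫ ≤ -(lam * η) * (L xprev - L xstar) := by
    rw [hv_inner]
    have h3 := mul_le_mul_of_nonneg_left h2 hη.le
    have hls : lam * η * (D (G xprev) * (1 / lam)) = η * D (G xprev) := by
      field_simp
    nlinarith [h3]
  -- descent
  have hdesc := descent_smooth hN hD hH hG hlip xprev v
  rw [hxt]
  nlinarith [hdesc, key, hNv2]
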